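/- arXiv:1701.03570 — 4 statements merged into one kernel-verified Lean document; each statement's English description precedes it below -/
import Mathlib

section
/- Let X be a Banach space, D ⊆ X a compact set with 0 ∈ D. For δ > 0 let O_δ denote the connected component of the open δ-neighborhood N_δ(D) = {x : dist(x,D) < δ} containing 0. Then ⋂_{δ>0} closure(O_δ) equals the connected component of D containing 0. -/
open Metric Set Filter Topology

/-- For a compact set `D` containing `0` in a Banach space, the intersection over `δ > 0`
of the closures of the connected components containing `0` of the open `δ`-neighborhoods
`{x | dist(x, D) < δ}` equals the connected component of `0` in `D`. -/
theorem stmt_0 {X : Type*} [NormedAddCommGroup X] [NormedSpace ℝ X] [CompleteSpace X]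
    (D : Set X) (hD : IsCompact D) (h0 : (0 : X) ∈ D) :
    (⋂ δ ∈ Set.Ioi (0 : ℝ),
        closure (connectedComponentIn {x : X | Metric.infDist x D < δ} 0)) =
      connectedComponentIn D 0 := by
  have hDne : D.Nonempty := ⟨0, h0⟩
  set N : ℝ → Set X := fun δ => {x : X | Metric.infDist x D < δ} with hNdef
  set O : ℝ → Set X := fun δ => connectedComponentIn (N δ) 0 with hOdef
  set K : Set X := ⋂ δ ∈ Set.Ioi (0 : ℝ), closure (O δ) with hKdef
  have hDN : ∀ δ : ℝ, 0 < δ → D ⊆ N δ := by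
    intro δ hδ x hx
    simpa [hNdef, Metric.infDist_zero_of_mem hx] using hδ
  have hOmono : ∀ δ δ' : ℝ, δ ≤ δ' → O δ ⊆ O δ' := by
    intro δ δ' h
    exact connectedComponentIn_mono 0 (fun x hx => lt_of_lt_of_le hx h)
  have hclN : ∀ δ : ℝ, closure (N δ) ⊆ {x : X | Metric.infDist x D ≤ δ} := by
    intro δ
    refine closure_minimal (fun x hx => le_of_lt (show Metric.infDist x D < δ from hx)) ?_
    exact isClosed_le (continuous_infDist_pt D) continuous_const
  have hclO : ∀ δ : ℝ, closure (O δ) ⊆ {x : X | Metric.infDist x D ≤ δ} := fun δ =>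
    (closure_mono (connectedComponentIn_subset _ _)).trans (hclN δ)
  have hKD : K ⊆ D := by
    intro x hx
    have hle : Metric.infDist x D ≤ 0 := by
      refine le_of_forall_pos_le_add fun δ hδ => ?_
      simpa using hclO δ (Set.mem_iInter₂.1 hx δ hδ)
    have : Metric.infDist x D = 0 := le_antisymm hle (Metric.infDist_nonneg)
    exact (hD.isClosed.mem_iff_infDist_zero hDne).2 this
  have h0N : ∀ δ : ℝ, 0 < δ → (0 : X) ∈ N δ := fun δ hδ => hDN δ hδ h0
  have h0O : ∀ δ : ℝ, 0 < δ → (0 : X) ∈ O δ := fun δ hδ =>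
    mem_connectedComponentIn (h0N δ hδ)
  have h0K : (0 : X) ∈ K :=
    Set.mem_iInter₂.2 fun δ hδ => subset_closure (h0O δ hδ)
  have hKcl : IsClosed K := isClosed_biInter fun _ _ => isClosed_closure
  have hKcomp : IsCompact K := hD.of_isClosed_subset hKcl hKD
  -- main auxiliary claim
  have aux : ∀ A B : Set X, IsCompact A → IsCompact B → Disjoint A B → (0 : X) ∈ A →
      B.Nonempty → B ⊆ K → K ⊆ A ∪ B → False := by
    intro A B hAc hBc hABd h0A hBne hBK hKAB
    obtain ⟨δ, hδ, hthick⟩ := hABd.exists_thickenings hAc hBc.isClosed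
    set U : Set X := thickening (δ/2) A with hU
    set V : Set X := thickening (δ/2) B with hV
    have hUV : Disjoint U V :=
      hthick.mono (thickening_mono (half_le_self hδ.le) A)
        (thickening_mono (half_le_self hδ.le) B)
    have hclUV : Disjoint (closure U) V := by
      refine hthick.mono ?_ (thickening_mono (half_le_self hδ.le) B)
      exact (closure_thickening_subset_cthickening _ _).trans
        (cthickening_subset_thickening' hδ (half_lt_self hδ) A)
    have hexη : ∃ η : ℝ, 0 < η ∧ closure (O η) ⊆ U ∪ V := by
      by_contra hcon
      push_neg at hcon
      have hcon' : ∀ n : ℕ, ∃ x ∈ closure (O (1 / (n + 1 : ℝ))), x ∉ U ∪ V := by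
        intro n
        have := hcon (1 / (n + 1 : ℝ)) (by positivity)
        exact Set.not_subset.1 this
      choose x hx1 hx2 using hcon'
      have hxd : ∀ n : ℕ, Metric.infDist (x n) D ≤ 1 / (n + 1 : ℝ) := fun n =>
        hclO _ (hx1 n)
      have hyex : ∀ n : ℕ, ∃ y ∈ D, dist (x n) y < 2 / (n + 1 : ℝ) := by
        intro n
        refine (Metric.infDist_lt_iff hDne).1 (lt_of_le_of_lt (hxd n) ?_)
        rw [div_lt_div_iff₀ (by positivity) (by positivity)]
        nlinarith [Nat.cast_nonneg (α := ℝ) n]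
      choose y hyD hyd using hyex
      obtain ⟨y₀, hy₀D, φ, hφ, hyt⟩ := hD.tendsto_subseq hyD
      have h2t : Tendsto (fun n : ℕ => 2 / (n + 1 : ℝ)) atTop (𝓝 0) := by
        have := (tendsto_one_div_add_atTop_nhds_zero_nat (𝕜 := ℝ)).const_mul 2
        simpa [mul_one_div, div_eq_mul_inv] using this
      have hdist0 : Tendsto (fun n => dist (x (φ n)) (y (φ n))) atTop (𝓝 0) := by
        refine squeeze_zero (fun n => dist_nonneg) (fun n => (hyd (φ n)).le.trans ?_)
          h2t
        gcongr
        exact_mod_cast hφ.id_le n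
      have hxt : Tendsto (x ∘ φ) atTop (𝓝 y₀) := by
        have := hdist0.add (tendsto_iff_dist_tendsto_zero.1 hyt)
        rw [add_zero] at this
        refine tendsto_iff_dist_tendsto_zero.2
          (squeeze_zero (fun n => dist_nonneg) (fun n => ?_) this)
        exact dist_triangle (x (φ n)) (y (φ n)) y₀
      have hy₀K : y₀ ∈ K := by
        refine Set.mem_iInter₂.2 fun η hη => ?_
        obtain ⟨m, hm⟩ := exists_nat_one_div_lt (show (0 : ℝ) < η from hη)
        refine isClosed_closure.mem_of_tendsto hxt ?_
        refine eventually_atTop.2 ⟨m, fun n hn => ?_⟩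
        refine closure_mono (hOmono _ _ ?_) (hx1 (φ n))
        have h1 : (1 : ℝ) / (φ n + 1) ≤ 1 / (m + 1) := by
          gcongr
          exact_mod_cast hn.trans (hφ.id_le n)
        exact h1.trans hm.le
      have hy₀UV : y₀ ∈ U ∪ V := by
        rcases hKAB hy₀K with h | h
        · exact Or.inl (self_subset_thickening (half_pos hδ) A h)
        · exact Or.inr (self_subset_thickening (half_pos hδ) B h)
      have : y₀ ∈ (U ∪ V)ᶜ := by
        refine ((isOpen_thickening.union isOpen_thickening).isClosed_compl).mem_of_tendsto
          hxt (Eventually.of_forall fun n => hx2 (φ n))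
      exact this hy₀UV
    obtain ⟨η, hη, hsub⟩ := hexη
    have hOU : O η ⊆ U := by
      refine IsPreconnected.subset_left_of_subset_union isOpen_thickening
        isOpen_thickening hUV ((subset_closure).trans hsub) ?_
        (isPreconnected_connectedComponentIn)
      exact ⟨0, h0O η hη, self_subset_thickening (half_pos hδ) A h0A⟩
    obtain ⟨b, hb⟩ := hBne
    have hbcl : b ∈ closure U :=
      closure_mono hOU (Set.mem_iInter₂.1 (hBK hb) η hη)
    exact (hclUV.ne_of_mem hbcl (self_subset_thickening (half_pos hδ) B hb)) rfl
  -- K is preconnected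
  have hKpre : IsPreconnected K := by
    rw [isPreconnected_iff_subset_of_fully_disjoint_closed hKcl]
    intro u v hu hv hKuv huv
    rcases (K ∩ u).eq_empty_or_nonempty with hA | hAne
    · refine Or.inr fun z hz => ?_
      rcases hKuv hz with h | h
      · exact absurd (Set.eq_empty_iff_forall_notMem.1 hA z ⟨hz, h⟩) not_false
      · exact h
    rcases (K ∩ v).eq_empty_or_nonempty with hB | hBne
    · refine Or.inl fun z hz => ?_
      rcases hKuv hz with h | h
      · exact h
      · exact absurd (Set.eq_empty_iff_forall_notMem.1 hB z ⟨hz, h⟩) not_false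
    exfalso
    have hAc : IsCompact (K ∩ u) := hKcomp.inter_right hu
    have hBc : IsCompact (K ∩ v) := hKcomp.inter_right hv
    have hABd : Disjoint (K ∩ u) (K ∩ v) :=
      Set.disjoint_of_subset Set.inter_subset_right Set.inter_subset_right huv
    have hKAB : K ⊆ (K ∩ u) ∪ (K ∩ v) := by
      intro z hz
      rcases hKuv hz with h | h
      · exact Or.inl ⟨hz, h⟩
      · exact Or.inr ⟨hz, h⟩
    rcases hKuv h0K with h0u | h0v
    · exact aux (K ∩ u) (K ∩ v) hAc hBc hABd ⟨h0K, h0u⟩ hBne Set.inter_subset_left hKAB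
    · exact aux (K ∩ v) (K ∩ u) hBc hAc hABd.symm ⟨h0K, h0v⟩ hAne Set.inter_subset_left
        (fun z hz => (hKAB hz).symm)
  -- conclude
  apply Set.Subset.antisymm
  · exact hKpre.subset_connectedComponentIn h0K hKD
  · refine Set.subset_iInter₂ fun δ hδ => ?_
    refine Set.Subset.trans ?_ subset_closure
    refine IsPreconnected.subset_connectedComponentIn isPreconnected_connectedComponentIn
      (mem_connectedComponentIn h0) ?_
    exact (connectedComponentIn_subset D 0).trans (hDN δ hδ)
end

section
/- For each k ∈ ℕ, the functional I on ℓ² from the example satisfies condition (A3'): letting X^k = {(0,x₁,…,x_k,0,0,…)}, there exists ρ_k > 0 such that sup{ I(u) : u ∈ X^k, ‖u‖ = ρ_k } < 0. -/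
noncomputable section

/-- The space `X = ℓ²`, with elements written `(t, x₁, x₂, …)`:
the first coordinate `t` is singled out. -/
abbrev X : Type := ℝ × lp (fun _ : ℕ => ℝ) 2

/-- The properties of the function `μ` of the example. -/
def MuOK (μ : ℝ → ℝ) : Prop :=
  ContDiff ℝ 1 μ ∧ (∀ t, μ t ∈ Set.Icc (-1 : ℝ) 1) ∧ (∀ t, μ (-t) = -μ t) ∧
    (∀ t, 1 ≤ t → μ t = 1) ∧ (∀ t, t ≤ -1 → μ t = -1) ∧
    ∀ t ∈ Set.Ioo (-1 : ℝ) 1, 0 < deriv μ t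

/-- `a₊(t) = 2 + μ(t)`. -/
def aplus (μ : ℝ → ℝ) (t : ℝ) : ℝ := 2 + μ t

/-- `a₋(t) = 2 − μ(t)`. -/
def aminus (μ : ℝ → ℝ) (t : ℝ) : ℝ := 2 - μ t

/-- `φ(t) = (t−1)²` for `t > 1`, `0` on `[−1,1]`, `(t+1)²` for `t < −1`. -/
def phi (t : ℝ) : ℝ := if 1 < t then (t - 1) ^ 2 else if t < -1 then (t + 1) ^ 2 else 0

/-- The `j`-th summand (for `j = 1, 2, …`, here indexed by `j : ℕ` standing for `j+1`) of the
nonquadratic part: `3^{−j} (a₊(t) (x_j)₊^{3/2} + a₋(t) (x_j)₋^{3/2})`. -/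
def W (μ : ℝ → ℝ) (t : ℝ) (j : ℕ) (x : ℝ) : ℝ :=
  ((3 : ℝ) ^ (j + 1))⁻¹ *
    (aplus μ t * (max x 0) ^ ((3 : ℝ) / 2) + aminus μ t * (max (-x) 0) ^ ((3 : ℝ) / 2))

/-- The functional
`I(t,x₁,x₂,…) = ½ ∑ xⱼ² − ⅔ ∑ 3^{−j} (a₊(t)(xⱼ)₊^{3/2} + a₋(t)(xⱼ)₋^{3/2}) + φ(t)`. -/
def Ifun (μ : ℝ → ℝ) (u : X) : ℝ :=
  (1 / 2) * (∑' j : ℕ, (u.2 j) ^ 2) - (2 / 3) * (∑' j : ℕ, W μ u.1 j (u.2 j)) + phi u.1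

private lemma mu_zero (μ : ℝ → ℝ) (hμ : MuOK μ) : μ 0 = 0 := by
  have h := hμ.2.2.1 0
  rw [neg_zero] at h
  linarith

private lemma W_zero_eq (μ : ℝ → ℝ) (hμ : MuOK μ) (j : ℕ) (x : ℝ) :
    W μ 0 j x = ((3 : ℝ) ^ (j + 1))⁻¹ * (2 * |x| ^ ((3 : ℝ) / 2)) := by
  have h0 : μ 0 = 0 := mu_zero μ hμ
  unfold W aplus aminus
  rw [h0]
  rcases le_total x 0 with hx | hx
  · rw [max_eq_right hx, max_eq_left (neg_nonneg.mpr hx), abs_of_nonpos hx,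
      Real.zero_rpow (by norm_num)]
    ring
  · rw [max_eq_left hx, max_eq_right (neg_nonpos.mpr hx), abs_of_nonneg hx,
      Real.zero_rpow (by norm_num)]
    ring

/-- Condition (A3') for the example: for each `k`, on the `k`-dimensional subspace
`X^k = {(0, x₁, …, x_k, 0, 0, …)}` there is `ρ_k > 0` with
`sup { I(u) : u ∈ X^k, ‖u‖ = ρ_k } < 0`. -/
theorem stmt_6 (μ : ℝ → ℝ) (hμ : MuOK μ) (k : ℕ) :
    ∃ ρ > (0 : ℝ), ∃ c < (0 : ℝ),
      ∀ u : X, u.1 = 0 → (∀ j : ℕ, k ≤ j → u.2 j = 0) → ‖u‖ = ρ → Ifun μ u ≤ c := by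
  rcases Nat.eq_zero_or_pos k with hk0 | hk
  · refine ⟨1, one_pos, -1, by norm_num, fun u h1 h2 h3 => absurd h3 ?_⟩
    have hu2 : u.2 = 0 := by
      ext j
      exact h2 j (hk0 ▸ j.zero_le)
    rw [Prod.norm_def, h1, hu2]
    simp
  · set K : ℝ := (k : ℝ) with hK
    have hKpos : (0 : ℝ) < K := by rw [hK]; exact_mod_cast hk
    set A : ℝ := (4 / 3) * ((3 : ℝ) ^ k)⁻¹ with hA
    have hApos : 0 < A := by positivity
    set δ : ℝ := (A / K) ^ 2 with hδ
    have hδpos : 0 < δ := by positivity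
    have hcneg : -(1 / 2) * A ^ 4 / K ^ 3 < 0 := by
      have h0 : 0 < (1 / 2) * A ^ 4 / K ^ 3 := by positivity
      have he : -(1 / 2) * A ^ 4 / K ^ 3 = -((1 / 2) * A ^ 4 / K ^ 3) := by ring
      rw [he]; linarith
    refine ⟨Real.sqrt K * δ, by positivity, -(1 / 2) * A ^ 4 / K ^ 3, hcneg, ?_⟩
    intro u h1 h2 h3
    have hρ2 : (Real.sqrt K * δ) ^ 2 = K * δ ^ 2 := by
      rw [mul_pow, Real.sq_sqrt hKpos.le]
    -- norm of second component
    have hnorm2 : ‖u.2‖ = Real.sqrt K * δ := by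
      rw [← h3, Prod.norm_def, h1]
      simp
    -- the quadratic tsum
    have hsum : (∑' j : ℕ, (u.2 j) ^ 2) = K * δ ^ 2 := by
      have h := lp.norm_rpow_eq_tsum (p := 2) (by norm_num) u.2
      simp only [ENNReal.toReal_ofNat, Real.rpow_two, Real.norm_eq_abs, sq_abs] at h
      rw [← h, hnorm2, hρ2]
    -- the W tsum is a finite sum
    have hWz : ∀ j ∉ Finset.range k, W μ 0 j (u.2 j) = 0 := by
      intro j hj
      rw [h2 j (not_lt.mp fun h => hj (Finset.mem_range.mpr h)), W_zero_eq μ hμ,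
        abs_zero, Real.zero_rpow (by norm_num)]
      ring
    have htW : (∑' j : ℕ, W μ u.1 j (u.2 j)) = ∑ j ∈ Finset.range k, W μ 0 j (u.2 j) := by
      rw [h1]
      exact tsum_eq_sum hWz
    -- finite sum of squares
    have hsum2 : ∑ j ∈ Finset.range k, (u.2 j) ^ 2 = K * δ ^ 2 := by
      rw [← hsum]
      exact (tsum_eq_sum fun j hj => by
        rw [h2 j (not_lt.mp fun h => hj (Finset.mem_range.mpr h))]; ring).symm
    -- some coordinate is large
    have hex : ∃ j ∈ Finset.range k, δ ^ 2 ≤ (u.2 j) ^ 2 := by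
      apply Finset.exists_le_of_sum_le ⟨0, Finset.mem_range.mpr hk⟩
      rw [Finset.sum_const, Finset.card_range, hsum2, nsmul_eq_mul]
    obtain ⟨j₀, hj₀, hx2⟩ := hex
    have habs : δ ≤ |u.2 j₀| := by
      have h := Real.sqrt_le_sqrt hx2
      rwa [Real.sqrt_sq hδpos.le, Real.sqrt_sq_eq_abs] at h
    have hrpow : δ ^ ((3 : ℝ) / 2) ≤ |u.2 j₀| ^ ((3 : ℝ) / 2) :=
      Real.rpow_le_rpow hδpos.le habs (by norm_num)
    have hterm : ((3 : ℝ) ^ k)⁻¹ * (2 * δ ^ ((3 : ℝ) / 2)) ≤ W μ 0 j₀ (u.2 j₀) := by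
      rw [W_zero_eq μ hμ]
      have h3pow : ((3 : ℝ) ^ k)⁻¹ ≤ ((3 : ℝ) ^ (j₀ + 1))⁻¹ := by
        apply inv_anti₀ (by positivity)
        exact pow_le_pow_right₀ (by norm_num) (Finset.mem_range.mp hj₀)
      exact mul_le_mul h3pow (by linarith) (by positivity) (by positivity)
    have hsumW : ((3 : ℝ) ^ k)⁻¹ * (2 * δ ^ ((3 : ℝ) / 2)) ≤
        ∑ j ∈ Finset.range k, W μ 0 j (u.2 j) := by
      refine le_trans hterm (Finset.single_le_sum (f := fun j => W μ 0 j (u.2 j)) (fun j _ => ?_) hj₀)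
      show 0 ≤ W μ 0 j (u.2 j)
      rw [W_zero_eq μ hμ]
      positivity
    have hδ32 : δ ^ ((3 : ℝ) / 2) = (A / K) ^ 3 := by
      rw [hδ, ← Real.rpow_natCast (A / K) 2, ← Real.rpow_mul (by positivity)]
      rw [show (2 : ℕ) * ((3 : ℝ) / 2) = (3 : ℕ) by norm_num, Real.rpow_natCast]
    have hphi : phi (0 : ℝ) = 0 := by norm_num [phi]
    have hI : Ifun μ u = (1 / 2) * (K * δ ^ 2)
        - (2 / 3) * ∑ j ∈ Finset.range k, W μ 0 j (u.2 j) := by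
      rw [Ifun, hsum, htW, h1, hphi, add_zero]
    rw [hI]
    have hfinal : (1 / 2) * (K * δ ^ 2) - (2 / 3) * (((3 : ℝ) ^ k)⁻¹ * (2 * (A / K) ^ 3))
        = -(1 / 2) * A ^ 4 / K ^ 3 := by
      rw [hδ, hA]
      field_simp
      ring
    calc (1 / 2) * (K * δ ^ 2) - (2 / 3) * ∑ j ∈ Finset.range k, W μ 0 j (u.2 j)
        ≤ (1 / 2) * (K * δ ^ 2) - (2 / 3) * (((3 : ℝ) ^ k)⁻¹ * (2 * δ ^ ((3 : ℝ) / 2))) := by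
          nlinarith [hsumW]
      _ = -(1 / 2) * A ^ 4 / K ^ 3 := by rw [hδ32, hfinal]

end
end

section
/- Let (x_j)_{j≥1} be a real sequence such that for every j, x_j = 0 or 3^{−2j} ≤ |x_j| ≤ 9·3^{−2j}, and suppose ∑_{j=1}^∞ 3^{−j}((x_j)₊^{3/2} − (x_j)₋^{3/2}) = 0. Then x_j = 0 for all j. -/
/-- If a real sequence `(x_j)_{j≥1}` (indexed here by `j : ℕ` standing for `j + 1`) satisfies,
for every `j`, `x_j = 0` or `3^{−2j} ≤ |x_j| ≤ 9·3^{−2j}`, and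
`∑_{j=1}^∞ 3^{−j}((x_j)₊^{3/2} − (x_j)₋^{3/2}) = 0`, then `x_j = 0` for all `j`. -/
theorem stmt_8 (x : ℕ → ℝ)
    (hx : ∀ j : ℕ, x j = 0 ∨
      (((3 : ℝ) ^ (2 * (j + 1)))⁻¹ ≤ |x j| ∧ |x j| ≤ 9 * ((3 : ℝ) ^ (2 * (j + 1)))⁻¹))
    (hsum : ∑' j : ℕ, ((3 : ℝ) ^ (j + 1))⁻¹ *
        ((max (x j) 0) ^ ((3 : ℝ) / 2) - (max (-(x j)) 0) ^ ((3 : ℝ) / 2)) = 0) :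
    ∀ j, x j = 0 := by
  set g : ℕ → ℝ := fun j => ((3 : ℝ) ^ (j + 1))⁻¹ *
      ((max (x j) 0) ^ ((3 : ℝ) / 2) - (max (-(x j)) 0) ^ ((3 : ℝ) / 2)) with hg
  have h32 : (3 : ℝ) / 2 ≠ 0 := by norm_num
  have hbpos : ∀ j : ℕ, (0 : ℝ) < ((3 : ℝ) ^ (j + 1))⁻¹ := fun j => by positivity
  have habs : ∀ j, |g j| = ((3 : ℝ) ^ (j + 1))⁻¹ * |x j| ^ ((3 : ℝ) / 2) := by
    intro j
    rcases le_or_gt 0 (x j) with h | h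
    · have h1 : max (x j) 0 = x j := max_eq_left h
      have h2 : max (-(x j)) 0 = 0 := max_eq_right (by linarith)
      rw [hg]
      simp only [h1, h2, Real.zero_rpow h32, sub_zero]
      rw [abs_mul, abs_of_pos (hbpos j), abs_of_nonneg (Real.rpow_nonneg h _),
        abs_of_nonneg h]
    · have h1 : max (x j) 0 = 0 := max_eq_right h.le
      have h2 : max (-(x j)) 0 = -(x j) := max_eq_left (by linarith)
      rw [hg]
      simp only [h1, h2, Real.zero_rpow h32, zero_sub]
      rw [abs_mul, abs_of_pos (hbpos j), abs_neg,
        abs_of_nonneg (Real.rpow_nonneg (by linarith) _), abs_of_neg h]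
  have hsq : ∀ j : ℕ, ((3 : ℝ) ^ (2 * (j + 1)))⁻¹ = (((3 : ℝ) ^ (j + 1))⁻¹) ^ 2 := by
    intro j
    rw [mul_comm, pow_mul, inv_pow]
  have hrpow_sq : ∀ b : ℝ, 0 ≤ b → (b ^ 2) ^ ((3 : ℝ) / 2) = b ^ 3 := by
    intro b hb
    rw [← Real.rpow_natCast b 2, ← Real.rpow_mul hb, ← Real.rpow_natCast b 3]
    norm_num
  have h81 : ∀ j : ℕ, (((3 : ℝ) ^ (j + 1))⁻¹) ^ 4 = ((81 : ℝ)⁻¹) ^ (j + 1) := by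
    intro j
    rw [← inv_pow, ← pow_mul, show (81 : ℝ)⁻¹ = ((3 : ℝ)⁻¹) ^ 4 by norm_num, ← pow_mul,
      mul_comm]
  have hupper : ∀ j, |g j| ≤ 27 * ((81 : ℝ)⁻¹) ^ (j + 1) := by
    intro j
    set b := ((3 : ℝ) ^ (j + 1))⁻¹ with hb
    have hbpos' := hbpos j
    have hub : |x j| ≤ 9 * b ^ 2 := by
      rcases hx j with h | h
      · rw [h]; simp; positivity
      · rw [← hsq j]; exact h.2
    have h9 : (9 : ℝ) * b ^ 2 = (3 * b) ^ 2 := by ring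
    have hxle : |x j| ^ ((3 : ℝ) / 2) ≤ (3 * b) ^ 3 := by
      rw [← hrpow_sq (3 * b) (by positivity), ← h9]
      exact Real.rpow_le_rpow (abs_nonneg _) hub (by norm_num)
    calc |g j| = b * |x j| ^ ((3 : ℝ) / 2) := habs j
      _ ≤ b * (3 * b) ^ 3 := by nlinarith [hbpos', Real.rpow_nonneg (abs_nonneg (x j)) ((3:ℝ)/2)]
      _ = 27 * b ^ 4 := by ring
      _ = 27 * ((81 : ℝ)⁻¹) ^ (j + 1) := by rw [← h81 j, hb]
  have hgeo : Summable (fun j : ℕ => 27 * ((81 : ℝ)⁻¹) ^ (j + 1)) := by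
    apply Summable.mul_left
    exact (summable_geometric_of_lt_one (by norm_num) (by norm_num)).comp_injective
      (add_left_injective 1)
  have hsummable : Summable g := by
    apply Summable.of_norm
    apply Summable.of_nonneg_of_le (fun j => norm_nonneg _) _ hgeo
    intro j
    exact hupper j
  by_contra hcon
  push_neg at hcon
  set j₀ := Nat.find hcon with hj₀def
  have hj₀ : x j₀ ≠ 0 := Nat.find_spec hcon
  have hmin : ∀ k, k < j₀ → x k = 0 := fun k hk => not_not.mp (Nat.find_min hcon hk)
  -- g j = 0 for j < j₀
  have hgz : ∀ j, x j = 0 → g j = 0 := by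
    intro j h
    rw [hg]
    simp [h, Real.zero_rpow h32]
  have hsplit := Summable.sum_add_tsum_nat_add (f := g) (j₀ + 1) hsummable
  have hfin : ∑ i ∈ Finset.range (j₀ + 1), g i = g j₀ := by
    apply Finset.sum_eq_single_of_mem j₀ (Finset.self_mem_range_succ j₀)
    intro i hi hne
    apply hgz
    by_contra hxi
    exact hxi (hmin i (lt_of_le_of_ne (Nat.lt_succ_iff.mp (Finset.mem_range.mp hi)) hne))
  rw [hfin, hsum] at hsplit
  have hgj₀ : g j₀ = - ∑' i, g (i + (j₀ + 1)) := by linarith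
  -- tail summability of norms
  have htail_sum : Summable (fun i : ℕ => g (i + (j₀ + 1))) := hsummable.comp_injective (add_left_injective _)
  have htail_norm : Summable (fun i : ℕ => |g (i + (j₀ + 1))|) := htail_sum.abs
  have hgeo2 : Summable (fun i : ℕ => 27 * ((81 : ℝ)⁻¹) ^ (i + (j₀ + 1) + 1)) :=
    hgeo.comp_injective (add_left_injective _)
  have htail_le : ∑' i, |g (i + (j₀ + 1))| ≤ 27 * ((81 : ℝ)⁻¹) ^ (j₀ + 2) * (80 / 81)⁻¹ := by
    calc ∑' i, |g (i + (j₀ + 1))| ≤ ∑' i, 27 * ((81 : ℝ)⁻¹) ^ (i + (j₀ + 1) + 1) :=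
          Summable.tsum_le_tsum (fun i => hupper _) htail_norm hgeo2
      _ = 27 * ((81 : ℝ)⁻¹) ^ (j₀ + 2) * ∑' i, ((81 : ℝ)⁻¹) ^ i := by
          rw [← tsum_mul_left]
          congr 1; ext i; ring
      _ = 27 * ((81 : ℝ)⁻¹) ^ (j₀ + 2) * (80 / 81)⁻¹ := by
          rw [tsum_geometric_of_lt_one (by norm_num) (by norm_num)]
          norm_num
  have hlow : ((81 : ℝ)⁻¹) ^ (j₀ + 1) ≤ |g j₀| := by
    set b := ((3 : ℝ) ^ (j₀ + 1))⁻¹ with hb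
    have hbpos' := hbpos j₀
    rcases hx j₀ with h | h
    · exact absurd h hj₀
    · have hlb : b ^ 2 ≤ |x j₀| := by rw [← hsq j₀] at *; exact h.1
      have : b ^ 3 ≤ |x j₀| ^ ((3 : ℝ) / 2) := by
        rw [← hrpow_sq b hbpos'.le]
        exact Real.rpow_le_rpow (by positivity) hlb (by norm_num)
      calc ((81 : ℝ)⁻¹) ^ (j₀ + 1) = b ^ 4 := by rw [← h81 j₀, hb]
        _ = b * b ^ 3 := by ring
        _ ≤ b * |x j₀| ^ ((3 : ℝ) / 2) := by nlinarith
        _ = |g j₀| := (habs j₀).symm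
  have habs_tsum : |g j₀| ≤ ∑' i, |g (i + (j₀ + 1))| := by
    rw [hgj₀, abs_neg]
    have := norm_tsum_le_tsum_norm (f := fun i => g (i + (j₀ + 1)))
      (by simpa [Real.norm_eq_abs] using htail_norm)
    simpa [Real.norm_eq_abs] using this
  have : ((81 : ℝ)⁻¹) ^ (j₀ + 1) ≤ 27 * ((81 : ℝ)⁻¹) ^ (j₀ + 2) * (80 / 81)⁻¹ :=
    le_trans hlow (le_trans habs_tsum htail_le)
  have hcontra : (27 : ℝ) * ((81 : ℝ)⁻¹) ^ (j₀ + 2) * (80 / 81)⁻¹ < ((81 : ℝ)⁻¹) ^ (j₀ + 1) := by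
    rw [pow_succ]
    have hp : (0 : ℝ) < ((81 : ℝ)⁻¹) ^ (j₀ + 1) := by positivity
    nlinarith
  linarith
end

section
/- (Failure of (PS)₀ for the example of Theorem 1.8.) The restriction of I (as in the previous example, I(u) = 1 − cos(2π‖u‖²) for ‖u‖ ≤ 1) to an infinite-dimensional Hilbert space E does not satisfy the Palais–Smale condition at level 0: there exists a sequence (u_j) with I(u_j) → 0 and I'(u_j) → 0 in E* having no convergent subsequence. -/
open Real Filter

/-- Failure of `(PS)₀`: if `E` is an infinite-dimensional Hilbert space and `I : E → ℝ` is a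
differentiable functional with `I(u) = 1 − cos(2π‖u‖²)` for `‖u‖ ≤ 1` (extended arbitrarily,
e.g. as in the example of Theorem 1.8), then `I` does not satisfy the Palais–Smale condition
at level `0`: there is a sequence `(u_j)` with `I(u_j) → 0`, `‖I'(u_j)‖ → 0`, and no
convergent subsequence. -/
theorem stmt_18 {E : Type*} [NormedAddCommGroup E] [InnerProductSpace ℝ E]
    [CompleteSpace E] (hE : ¬ FiniteDimensional ℝ E)
    (I : E → ℝ) (hdiff : Differentiable ℝ I)
    (hI : ∀ u : E, ‖u‖ ≤ 1 → I u = 1 - Real.cos (2 * π * ‖u‖ ^ 2)) :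
    ∃ u : ℕ → E,
      Tendsto (fun j => I (u j)) atTop (nhds 0) ∧
      Tendsto (fun j => ‖fderiv ℝ I (u j)‖) atTop (nhds 0) ∧
      ∀ φ : ℕ → ℕ, StrictMono φ → ¬ ∃ l : E, Tendsto (fun j => u (φ j)) atTop (nhds l) := by
  classical
  -- Get an orthonormal sequence
  obtain ⟨w, b, hb⟩ := exists_hilbertBasis ℝ E
  have hwinf : w.Infinite := by
    intro hwfin
    apply hE
    have hdense := b.dense_span
    rw [hb, Subtype.range_coe] at hdense
    have hfd : FiniteDimensional ℝ (Submodule.span ℝ w : Submodule ℝ E) :=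
      FiniteDimensional.span_of_finite ℝ hwfin
    have hclosed : IsClosed ((Submodule.span ℝ w : Submodule ℝ E) : Set E) :=
      (Submodule.span ℝ w).closed_of_finiteDimensional
    have htop : (Submodule.span ℝ w : Submodule ℝ E) = ⊤ := by
      rw [← hclosed.submodule_topologicalClosure_eq]
      exact hdense
    have : FiniteDimensional ℝ (⊤ : Submodule ℝ E) := htop ▸ hfd
    exact (Submodule.topEquiv : (⊤ : Submodule ℝ E) ≃ₗ[ℝ] E).finiteDimensional
  set emb : ℕ ↪ w := hwinf.natEmbedding _
  set e : ℕ → E := fun n => (emb n : E) with he_def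
  have he : Orthonormal ℝ e := by
    have := b.orthonormal.comp emb emb.injective
    simpa [hb, he_def, Function.comp_def] using this
  have hnorme : ∀ n, ‖e n‖ = 1 := fun n => he.1 n
  -- the radii
  set r : ℕ → ℝ := fun j => 1 - 1 / (j + 2) with hr_def
  have hrpos : ∀ j, (1:ℝ)/2 ≤ r j := by
    intro j
    have hj : (0:ℝ) ≤ (j:ℝ) := Nat.cast_nonneg j
    have h2 : (2:ℝ) ≤ (j:ℝ) + 2 := by linarith
    have : 1 / ((j:ℝ) + 2) ≤ 1 / 2 := by
      apply one_div_le_one_div_of_le <;> linarith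
    simp only [hr_def]; linarith
  have hrlt : ∀ j, r j < 1 := by
    intro j
    have : (0:ℝ) < 1 / ((j:ℝ) + 2) := by positivity
    simp only [hr_def]; linarith
  have hrlim : Tendsto r atTop (nhds 1) := by
    have h1 : Tendsto (fun j : ℕ => ((j:ℝ) + 2)) atTop atTop :=
      tendsto_atTop_add_const_right _ _ tendsto_natCast_atTop_atTop
    have h2 : Tendsto (fun j : ℕ => 1 / ((j:ℝ) + 2)) atTop (nhds 0) := by
      simpa [one_div, Pi.inv_def] using h1.inv_tendsto_atTop
    have := (tendsto_const_nhds (x := (1:ℝ))).sub h2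
    simpa [hr_def] using this
  set u : ℕ → E := fun j => r j • e j with hu_def
  have hnormu : ∀ j, ‖u j‖ = r j := by
    intro j
    have h0 : 0 ≤ r j := le_trans (by norm_num) (hrpos j)
    simp [hu_def, norm_smul, hnorme, abs_of_nonneg h0]
  have hult : ∀ j, ‖u j‖ < 1 := fun j => (hnormu j) ▸ hrlt j
  refine ⟨u, ?_, ?_, ?_⟩
  · -- tendsto of values
    have hval : ∀ j, I (u j) = 1 - Real.cos (2 * π * (r j) ^ 2) := by
      intro j
      rw [hI (u j) (le_of_lt (hult j)), hnormu]
    have hc : Tendsto (fun t : ℝ => 1 - Real.cos (2 * π * t ^ 2)) (nhds 1)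
        (nhds (1 - Real.cos (2 * π * 1 ^ 2))) :=
      (continuous_const.sub (Real.continuous_cos.comp (continuous_const.mul (continuous_pow 2)))).tendsto 1
    have := hc.comp hrlim
    simp only [Function.comp_def, one_pow, mul_one, Real.cos_two_pi, sub_self] at this
    simpa [hval] using this
  · -- tendsto of derivatives
    have hg : ∀ x : E, HasFDerivAt (fun y : E => 1 - Real.cos (2 * π * ‖y‖ ^ 2))
        ((4 * π * Real.sin (2 * π * ‖x‖ ^ 2)) • (innerSL ℝ x)) x := by
      intro x
      have h1 : HasFDerivAt (fun y : E => ‖y‖ ^ 2) (2 • (innerSL ℝ x)) x :=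
        (hasStrictFDerivAt_norm_sq x).hasFDerivAt
      have h2 : HasFDerivAt (fun y : E => 2 * π * ‖y‖ ^ 2)
          ((2 * π) • (2 • (innerSL ℝ x))) x := h1.const_mul (2 * π)
      have h3 : HasDerivAt Real.cos (-Real.sin (2 * π * ‖x‖ ^ 2)) (2 * π * ‖x‖ ^ 2) :=
        Real.hasDerivAt_cos _
      have h4 := (h3.comp_hasFDerivAt x h2).const_sub 1
      refine h4.congr_fderiv ?_
      ext y
      simp only [ContinuousLinearMap.coe_smul', Pi.smul_apply, ContinuousLinearMap.neg_apply,
        ContinuousLinearMap.smul_apply, smul_eq_mul, two_smul, ContinuousLinearMap.add_apply]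
      ring
    have hfd : ∀ j, fderiv ℝ I (u j) =
        (4 * π * Real.sin (2 * π * (r j) ^ 2)) • (innerSL ℝ (u j)) := by
      intro j
      have hev : I =ᶠ[nhds (u j)] fun y : E => 1 - Real.cos (2 * π * ‖y‖ ^ 2) := by
        filter_upwards [Metric.ball_mem_nhds (u j) (show (0:ℝ) < 1 - ‖u j‖ by linarith [hult j])]
          with y hy
        apply hI
        have := mem_ball_iff_norm.1 hy
        have h := norm_sub_norm_le y (u j)
        linarith [abs_le.1 (abs_norm (y - u j) ▸ le_of_lt this) |>.2]
      have := ((hg (u j)).congr_of_eventuallyEq hev).fderiv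
      rw [this, hnormu]
    have hbound : ∀ j, ‖fderiv ℝ I (u j)‖ ≤ 4 * π * |Real.sin (2 * π * (r j) ^ 2)| := by
      intro j
      rw [hfd j, norm_smul, innerSL_apply_norm, Real.norm_eq_abs, abs_mul,
        abs_of_nonneg (by positivity : (0:ℝ) ≤ 4 * π)]
      have h1 : ‖u j‖ ≤ 1 := le_of_lt (hult j)
      have h2 : (0:ℝ) ≤ 4 * π * |Real.sin (2 * π * (r j) ^ 2)| := by positivity
      nlinarith [abs_nonneg (Real.sin (2 * π * (r j) ^ 2)), Real.pi_pos, norm_nonneg (u j)]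
    have hblim : Tendsto (fun j => 4 * π * |Real.sin (2 * π * (r j) ^ 2)|) atTop (nhds 0) := by
      have hc : Tendsto (fun t : ℝ => 4 * π * |Real.sin (2 * π * t ^ 2)|) (nhds 1)
          (nhds (4 * π * |Real.sin (2 * π * 1 ^ 2)|)) :=
        (continuous_const.mul
          ((Real.continuous_sin.comp (continuous_const.mul (continuous_pow 2))).abs)).tendsto 1
      have := hc.comp hrlim
      simpa [Function.comp_def, Real.sin_two_pi] using this
    exact squeeze_zero (fun j => norm_nonneg _) hbound hblim
  · -- no convergent subsequence
    intro φ hφ ⟨l, hl⟩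
    have hcauchy := hl.cauchySeq
    obtain ⟨N, hN⟩ := Metric.cauchySeq_iff.1 hcauchy (1/2) (by norm_num)
    have hneq : φ N ≠ φ (N + 1) := ne_of_lt (hφ (Nat.lt_succ_self N))
    have hdist := hN N le_rfl (N + 1) (Nat.le_succ N)
    have hinner : (inner ℝ (u (φ N)) (u (φ (N+1))) : ℝ) = 0 := by
      simp only [hu_def, inner_smul_left, inner_smul_right, RCLike.conj_to_real]
      rw [he.2 hneq]
      ring
    have hsq : ‖u (φ N) - u (φ (N+1))‖ ^ 2 = ‖u (φ N)‖ ^ 2 + ‖u (φ (N+1))‖ ^ 2 := by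
      rw [@norm_sub_sq_real, hinner]; ring
    have h1 : (1:ℝ)/2 ≤ ‖u (φ N) - u (φ (N+1))‖ ^ 2 := by
      rw [hsq, hnormu, hnormu]
      have ha := hrpos (φ N); have hb := hrpos (φ (N+1))
      nlinarith
    have h2 : dist (u (φ N)) (u (φ (N+1))) = ‖u (φ N) - u (φ (N+1))‖ := dist_eq_norm _ _
    rw [h2] at hdist
    nlinarith [norm_nonneg (u (φ N) - u (φ (N+1)))]
end
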